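/- Let p be an odd prime and k > 1 with 2k + 1 not a power of p. Then there exists i with 0 < i ≤ k such that C(2k+1, 2i) − C(2k+1, 2i−1) is not divisible by p. -/

import Mathlib

open Nat

lemma lucas_pow (p : ℕ) [hp : Fact p.Prime] (e n k : ℕ) :
    Nat.choose n k ≡ Nat.choose (n % p ^ e) (k % p ^ e) * Nat.choose (n / p ^ e) (k / p ^ e) [MOD p] := by
  induction e generalizing n k with
  | zero => simpa [Nat.mod_one] using Nat.ModEq.refl _
  | succ e ih =>
    have h1 : Nat.choose n k ≡ Nat.choose (n % p) (k % p) * Nat.choose (n / p) (k / p) [MOD p] :=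
      Choose.choose_modEq_choose_mod_mul_choose_div_nat
    have h2 := ih (n / p) (k / p)
    have hmm : ∀ m : ℕ, (m % p ^ (e + 1)) % p = m % p := fun m =>
      Nat.mod_mod_of_dvd m (dvd_pow_self p (Nat.succ_ne_zero e))
    have hmd : ∀ m : ℕ, (m % p ^ (e + 1)) / p = (m / p) % p ^ e := by
      intro m
      rw [pow_succ, Nat.mul_comm, Nat.mod_mul_right_div_self]
    have h3 : Nat.choose (n % p ^ (e + 1)) (k % p ^ (e + 1)) ≡
        Nat.choose (n % p) (k % p) * Nat.choose (n / p % p ^ e) (k / p % p ^ e) [MOD p] := by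
      have := Choose.choose_modEq_choose_mod_mul_choose_div_nat
        (n := n % p ^ (e + 1)) (k := k % p ^ (e + 1)) (p := p)
      rwa [hmm, hmm, hmd, hmd] at this
    have hdd : ∀ m : ℕ, m / p / p ^ e = m / p ^ (e + 1) := by
      intro m
      rw [Nat.div_div_eq_div_mul, pow_succ, Nat.mul_comm]
    calc Nat.choose n k ≡ Nat.choose (n % p) (k % p) * Nat.choose (n / p) (k / p) [MOD p] := h1
      _ ≡ Nat.choose (n % p) (k % p) * (Nat.choose (n / p % p ^ e) (k / p % p ^ e) *
            Nat.choose (n / p / p ^ e) (k / p / p ^ e)) [MOD p] := Nat.ModEq.mul_left _ h2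
      _ = Nat.choose (n % p) (k % p) * Nat.choose (n / p % p ^ e) (k / p % p ^ e) *
            Nat.choose (n / p ^ (e + 1)) (k / p ^ (e + 1)) := by rw [hdd, hdd, mul_assoc]
      _ ≡ Nat.choose (n % p ^ (e + 1)) (k % p ^ (e + 1)) *
            Nat.choose (n / p ^ (e + 1)) (k / p ^ (e + 1)) [MOD p] := Nat.ModEq.mul_right _ h3.symm

lemma helper_not_dvd (p A B u : ℕ) (hA : A ≡ u [MOD p]) (hB : p ∣ B) (hu : ¬ p ∣ u) :
    ¬ ((p : ℤ) ∣ (A : ℤ) - (B : ℤ)) := by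
  intro hd
  apply hu
  have h1 : (p : ℤ) ∣ (u : ℤ) - (A : ℤ) := hA.dvd
  have h2 : (p : ℤ) ∣ (B : ℤ) := Int.natCast_dvd_natCast.mpr hB
  have : (p : ℤ) ∣ (u : ℤ) := by
    have := dvd_add (dvd_add h1 hd) h2
    simpa using this
  exact_mod_cast this

lemma pow_sub_one_mod (p e : ℕ) (hp : 2 ≤ p) (he : e ≠ 0) : (p ^ e - 1) % p = p - 1 := by
  have hpe : p ≤ p ^ e := Nat.le_self_pow he p
  have hds : p ∣ p ^ e - p := Nat.dvd_sub (dvd_pow_self p he) dvd_rfl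
  have hmeq : (p - 1) % p = (p ^ e - 1) % p := by
    apply (Nat.modEq_iff_dvd' (by omega)).mpr
    have : p ^ e - 1 - (p - 1) = p ^ e - p := by omega
    rw [this]; exact hds
  rw [← hmeq]; exact Nat.mod_eq_of_lt (by omega)

lemma mod_pow_lt_pow_sub_one (p e n : ℕ) (hp : 2 ≤ p) (he : e ≠ 0) (hlt : n % p < p - 1) :
    n % p ^ e < p ^ e - 1 := by
  have h1 : n % p ^ e % p = n % p := Nat.mod_mod_of_dvd n (dvd_pow_self p he)
  have h2 := pow_sub_one_mod p e hp he
  have h3 : n % p ^ e < p ^ e := Nat.mod_lt _ (Nat.pow_pos (by omega))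
  by_contra hge
  push_neg at hge
  have heq : n % p ^ e = p ^ e - 1 := by omega
  rw [heq, h2] at h1
  omega

theorem exists_choose_diff_not_dvd (p k : ℕ) (hp : p.Prime) (hodd : Odd p)
    (hk : 1 < k) (h : ¬ ∃ s : ℕ, 2 * k + 1 = p ^ s) :
    ∃ i : ℕ, 0 < i ∧ i ≤ k ∧
      ¬ ((p : ℤ) ∣ ((2 * k + 1).choose (2 * i) : ℤ) - (2 * k + 1).choose (2 * i - 1)) := by
  haveI : Fact p.Prime := ⟨hp⟩
  set n := 2 * k + 1 with hn
  have hp2 : p % 2 = 1 := Nat.odd_iff.mp hodd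
  have hp3 : 3 ≤ p := by have := hp.two_le; omega
  have hn5 : 5 ≤ n := by omega
  by_cases hdvd : (p : ℤ) ∣ (n : ℤ) * ((n : ℤ) - 3)
  case neg =>
    refine ⟨1, one_pos, by omega, ?_⟩
    intro hd
    apply hdvd
    norm_num at hd
    have hc2 : n.choose 2 = n * k := by
      rw [Nat.choose_two_right]
      have h21 : n - 1 = 2 * k := by omega
      rw [h21, Nat.mul_div_assoc n ⟨k, rfl⟩]
      congr 1
      omega
    have hc1 : n.choose 1 = n := Nat.choose_one_right n
    have hkey : (n : ℤ) * ((n : ℤ) - 3) = 2 * ((n.choose 2 : ℤ) - (n : ℤ)) := by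
      rw [hc2]
      push_cast [hn]
      ring
    rw [hkey]
    exact Dvd.dvd.mul_left hd 2
  case pos =>
    -- derive n % p = 0 or n % p = 3 % p
    have hprime : Prime (p : ℤ) := Nat.prime_iff_prime_int.mp hp
    have hcase : n % p = 0 ∨ n % p = 3 % p := by
      rcases hprime.dvd_mul.mp hdvd with hd | hd
      · left
        have : p ∣ n := Int.natCast_dvd_natCast.mp hd
        omega
      · right
        have h3n : p ∣ n - 3 := by
          have hc : ((n - 3 : ℕ) : ℤ) = (n : ℤ) - 3 := by push_cast; omega
          rw [← Int.natCast_dvd_natCast, hc]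
          exact hd
        have := (Nat.modEq_iff_dvd' (by omega : 3 ≤ n)).mpr h3n
        exact this.symm
    have hmodlt : n % p < p - 1 := by
      rcases hcase with hc | hc
      · omega
      · by_cases hp3' : p = 3
        · subst hp3'; omega
        · have h3p : 3 % p = 3 := Nat.mod_eq_of_lt (by omega)
          omega
    have hple : p ≤ n := by
      by_contra hlt
      push_neg at hlt
      have he : n % p = n := Nat.mod_eq_of_lt hlt
      have h3p : 3 % p ≤ 3 := Nat.mod_le 3 p
      omega
    have hpn : p < n := by
      rcases Nat.lt_or_ge p n with h' | h'
      · exact h'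
      · exfalso; apply h; exact ⟨1, by rw [pow_one]; omega⟩
    set m := Nat.log p n with hm
    have hm1 : 1 ≤ m := Nat.log_pos hp.one_lt hple
    have hpmpos : 0 < p ^ m := Nat.pow_pos hp.pos
    have hpm : p ^ m ≤ n := Nat.pow_log_le_self p (by omega)
    have hltm : n < p ^ (m + 1) := Nat.lt_pow_succ_log_self hp.one_lt n
    have hpmodd : p ^ m % 2 = 1 := Nat.odd_iff.mp (hodd.pow)
    set a := n / p ^ m with ha
    have ha1 : 1 ≤ a := (Nat.one_le_div_iff hpmpos).mpr hpm
    have hap : a < p := by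
      rw [ha, Nat.div_lt_iff_lt_mul hpmpos]
      calc n < p ^ (m + 1) := hltm
        _ = p * p ^ m := by rw [pow_succ, Nat.mul_comm]
    by_cases ha2 : 2 ≤ a
    · -- case 2a : i = p ^ m
      refine ⟨p ^ m, hpmpos, ?_, ?_⟩
      · have h2pm : 2 * p ^ m ≤ n := by
          calc 2 * p ^ m ≤ a * p ^ m := Nat.mul_le_mul_right _ ha2
            _ ≤ n := Nat.div_mul_le_self n (p ^ m)
        omega
      · have hA : n.choose (2 * p ^ m) ≡ Nat.choose a 2 [MOD p] := by
          have h1 := lucas_pow p m n (2 * p ^ m)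
          rw [Nat.mul_mod_left, Nat.mul_div_cancel 2 hpmpos, Nat.choose_zero_right,
            one_mul, ← ha] at h1
          exact h1
        have hB : p ∣ n.choose (2 * p ^ m - 1) := by
          have hx : 2 * p ^ m - 1 = p ^ m + (p ^ m - 1) := by omega
          have h1 := lucas_pow p m n (p ^ m + (p ^ m - 1))
          have hmod : (p ^ m + (p ^ m - 1)) % p ^ m = p ^ m - 1 := by
            rw [Nat.add_mod_left]
            exact Nat.mod_eq_of_lt (by omega)
          have hdiv : (p ^ m + (p ^ m - 1)) / p ^ m = 1 := by
            rw [Nat.add_comm, Nat.add_div_right _ hpmpos, Nat.div_eq_of_lt (by omega)]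
          rw [hmod, hdiv, ← ha] at h1
          have hzero : Nat.choose (n % p ^ m) (p ^ m - 1) = 0 :=
            Nat.choose_eq_zero_of_lt
              (mod_pow_lt_pow_sub_one p m n (by omega) (by omega) hmodlt)
          rw [hzero, zero_mul] at h1
          rw [hx]
          exact Nat.modEq_zero_iff_dvd.mp h1
        refine helper_not_dvd p _ _ _ hA hB ?_
        intro hdc
        have h2c : Nat.choose a 2 * 2 = a * (a - 1) := by
          rw [Nat.choose_two_right]
          apply Nat.div_mul_cancel
          have he : Even ((a - 1) * ((a - 1) + 1)) := Nat.even_mul_succ_self (a - 1)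
          have hae : (a - 1) + 1 = a := by omega
          rw [hae] at he
          rw [Nat.mul_comm]
          exact he.two_dvd
        have hdc2 : p ∣ a * (a - 1) := h2c ▸ Dvd.dvd.mul_right hdc 2
        rcases (Nat.Prime.dvd_mul hp).mp hdc2 with hda | hda
        · have := Nat.le_of_dvd (by omega) hda; omega
        · have := Nat.le_of_dvd (by omega) hda; omega
    · -- case 2b : a = 1
      have ha1' : a = 1 := by omega
      set r := n - p ^ m with hrdef
      have hnr : n = p ^ m + r := by omega
      have hrpos : r ≠ 0 := by
        intro h0
        exact h ⟨m, by omega⟩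
      have hrlt : r < p ^ m := by
        have h2 : n < 2 * p ^ m := by
          have := (Nat.div_lt_iff_lt_mul hpmpos).mp (by omega : n / p ^ m < 2)
          omega
        omega
      have hnmod : n % p ^ m = r := by
        rw [hnr, Nat.add_mod_left]
        exact Nat.mod_eq_of_lt hrlt
      have hpm0 : p ^ m % p = 0 := Nat.mod_eq_zero_of_dvd (dvd_pow_self p (by omega))
      have hrmodp : n % p = r % p := by
        conv_lhs => rw [hnr]
        rw [Nat.add_mod, hpm0, Nat.zero_add, Nat.mod_mod_of_dvd r dvd_rfl]
      have hreven : r % 2 = 0 := by omega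
      set t := Nat.log p r with htdef
      have hpt : p ^ t ≤ r := Nat.pow_log_le_self p hrpos
      have hrlt2 : r < p ^ (t + 1) := Nat.lt_pow_succ_log_self hp.one_lt r
      have hptpos : 0 < p ^ t := Nat.pow_pos hp.pos
      have ht1 : 1 ≤ t := by
        by_contra h0
        have ht0 : t = 0 := by omega
        rw [ht0, pow_one] at hrlt2
        have hrr : r % p = r := Nat.mod_eq_of_lt hrlt2
        rcases hcase with hc | hc
        · omega
        · by_cases hp3' : p = 3
          · subst hp3'; omega
          · have h3p : 3 % p = 3 := Nat.mod_eq_of_lt (by omega)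
            omega
      have htm : t < m := by
        have hlt' : p ^ t < p ^ m := lt_of_le_of_lt hpt hrlt
        exact (Nat.pow_lt_pow_iff_right hp.one_lt).mp hlt'
      have hptm : p ^ t < p ^ m := lt_of_le_of_lt hpt hrlt
      set d := r / p ^ t with hddef
      have hd1 : 1 ≤ d := (Nat.one_le_div_iff hptpos).mpr hpt
      have hdp : d < p := by
        rw [hddef, Nat.div_lt_iff_lt_mul hptpos]
        calc r < p ^ (t + 1) := hrlt2
          _ = p * p ^ t := by rw [pow_succ, Nat.mul_comm]
      have hptodd : p ^ t % 2 = 1 := Nat.odd_iff.mp (hodd.pow)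
      have hjlt : p ^ m + p ^ t < n := by
        have hne : p ^ t ≠ r := by
          intro he
          omega
        omega
      refine ⟨(p ^ m + p ^ t) / 2, by omega, by omega, ?_⟩
      have h2i : 2 * ((p ^ m + p ^ t) / 2) = p ^ m + p ^ t := by omega
      rw [h2i]
      have hA : n.choose (p ^ m + p ^ t) ≡ d [MOD p] := by
        have h1 := lucas_pow p m n (p ^ m + p ^ t)
        have hjm : (p ^ m + p ^ t) % p ^ m = p ^ t := by
          rw [Nat.add_mod_left]
          exact Nat.mod_eq_of_lt hptm
        have hjd : (p ^ m + p ^ t) / p ^ m = 1 := by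
          rw [Nat.add_comm, Nat.add_div_right _ hpmpos, Nat.div_eq_of_lt hptm]
        rw [hnmod, hjm, hjd, ← ha, ha1', Nat.choose_self, mul_one] at h1
        have h2 := lucas_pow p t r (p ^ t)
        rw [Nat.mod_self, Nat.div_self hptpos, Nat.choose_zero_right, one_mul,
          Nat.choose_one_right, ← hddef] at h2
        exact h1.trans h2
      have hB : p ∣ n.choose (p ^ m + p ^ t - 1) := by
        have hx : p ^ m + p ^ t - 1 = p ^ m + (p ^ t - 1) := by omega
        rw [hx]
        have h1 := lucas_pow p m n (p ^ m + (p ^ t - 1))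
        have hjm : (p ^ m + (p ^ t - 1)) % p ^ m = p ^ t - 1 := by
          rw [Nat.add_mod_left]
          exact Nat.mod_eq_of_lt (by omega)
        have hjd : (p ^ m + (p ^ t - 1)) / p ^ m = 1 := by
          rw [Nat.add_comm, Nat.add_div_right _ hpmpos, Nat.div_eq_of_lt (by omega)]
        rw [hnmod, hjm, hjd, ← ha, ha1', Nat.choose_self, mul_one] at h1
        have h2 := lucas_pow p t r (p ^ t - 1)
        rw [Nat.mod_eq_of_lt (by omega : p ^ t - 1 < p ^ t),
          Nat.div_eq_of_lt (by omega : p ^ t - 1 < p ^ t), Nat.choose_zero_right, mul_one] at h2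
        have hzero : Nat.choose (r % p ^ t) (p ^ t - 1) = 0 :=
          Nat.choose_eq_zero_of_lt
            (mod_pow_lt_pow_sub_one p t r (by omega) (by omega) (by omega))
        rw [hzero] at h2
        exact Nat.modEq_zero_iff_dvd.mp (h1.trans h2)
      refine helper_not_dvd p _ _ _ hA hB ?_
      intro hdc
      have := Nat.le_of_dvd (by omega) hdc
      omega
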